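/- Let n ≥ 2, L ≥ 1, r_0 > 0, and u = (u_1,…,u_n) ∈ (Z^d)^n. If for every nonempty proper subset J of {1,…,n} one has min_{i∈J, j∉J} ‖u_i − u_j‖_∞ < 2L + r_0, then dist_∞(u, D) < (n−1)(2L + r_0), where D = {(x,…,x) : x ∈ Z^d} is the diagonal. Equivalently: every partially interactive cube (one with dist(u, D) ≥ (n−1)(2L+r_0)) is decomposable. -/
import Mathlib


/-- If for every nonempty proper subset `J` of `{1,…,n}` one has
`min_{i∈J, j∉J} ‖u_i − u_j‖_∞ < 2L + r₀`, then `dist_∞(u, D) < (n−1)(2L + r₀)`,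
where `D` is the diagonal `{(x,…,x) : x ∈ ℤ^d}`; i.e. there is `x ∈ ℤ^d` with
`‖u_j − x‖_∞ < (n−1)(2L+r₀)` for all `j`.  (Equivalently: every partially
interactive cube is decomposable.)  Here `Fin d → ℤ` carries the sup norm. -/
theorem stmt2 (d n : ℕ) (hn : 2 ≤ n) (L : ℕ) (hL : 1 ≤ L) (r0 : ℝ) (hr0 : 0 < r0)
    (u : Fin n → (Fin d → ℤ))
    (h : ∀ J : Finset (Fin n), J.Nonempty → J ≠ Finset.univ →
      ∃ i ∈ J, ∃ j ∉ J, ‖u i - u j‖ < 2 * (L : ℝ) + r0) :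
    ∃ x : Fin d → ℤ, ∀ j : Fin n, ‖u j - x‖ < ((n : ℝ) - 1) * (2 * L + r0) := by
  haveI : NeZero n := ⟨by omega⟩
  set R : ℝ := 2 * (L : ℝ) + r0 with hRdef
  have hR : 0 < R := by positivity
  have key : ∀ k, 1 ≤ k → k ≤ n → ∃ J : Finset (Fin n), J.card = k ∧
      ∀ j ∈ J, j = 0 ∨ ‖u j - u 0‖ < ((k : ℝ) - 1) * R := by
    intro k hk1 hkn
    induction k, hk1 using Nat.le_induction with
    | base =>
      exact ⟨{0}, by simp, fun j hj => Or.inl (Finset.mem_singleton.mp hj)⟩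
    | succ k hk ih =>
      obtain ⟨J, hcard, hbound⟩ := ih (by omega)
      have hne : J.Nonempty := Finset.card_pos.mp (by omega)
      have hneq : J ≠ Finset.univ := by
        intro hJ
        have := Finset.card_univ (α := Fin n)
        rw [hJ, this] at hcard
        simp at hcard; omega
      obtain ⟨i, hiJ, j, hjJ, hij⟩ := h J hne hneq
      refine ⟨insert j J, ?_, ?_⟩
      · rw [Finset.card_insert_of_notMem hjJ, hcard]
      · intro m hm
        rcases Finset.mem_insert.mp hm with hmj | hmJ
        · subst hmj
          right
          have hi0 : ‖u i - u 0‖ ≤ ((k : ℝ) - 1) * R := by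
            rcases hbound i hiJ with h0 | hlt
            · subst h0; simp
              have : (1 : ℝ) ≤ (k : ℝ) := by exact_mod_cast hk
              nlinarith
            · linarith
          calc ‖u m - u 0‖ ≤ ‖u m - u i‖ + ‖u i - u 0‖ := norm_sub_le_norm_sub_add_norm_sub _ _ _
            _ < R + ((k : ℝ) - 1) * R := by
                have : ‖u m - u i‖ = ‖u i - u m‖ := norm_sub_rev _ _
                rw [this]; linarith
            _ = ((↑(k+1) : ℝ) - 1) * R := by push_cast; ring
        · rcases hbound m hmJ with h0 | hlt
          · exact Or.inl h0
          · right
            have : ((k : ℝ) - 1) * R ≤ ((↑(k+1) : ℝ) - 1) * R := by push_cast; nlinarith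
            linarith
  obtain ⟨J, hcard, hbound⟩ := key n (by omega) le_rfl
  have hJu : J = Finset.univ := Finset.eq_univ_of_card _ (by simp [hcard])
  refine ⟨u 0, fun j => ?_⟩
  rcases hbound j (hJu ▸ Finset.mem_univ j) with h0 | hlt
  · subst h0
    simp only [sub_self, norm_zero]
    have : (2 : ℝ) ≤ (n : ℝ) := by exact_mod_cast hn
    nlinarith
  · exact hlt
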